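/- Let (X, d) be a complete metric space, let φ : [0,∞) → [0,∞) be a comparison function, and let f : X → X satisfy d(f(x₁), f(x₂)) ≤ φ(d(x₁, x₂)) for all x₁, x₂ ∈ X. Then f has a unique fixed point x̄ ∈ X, and for every x₀ ∈ X the sequence of iterates fⁿ(x₀) converges to x̄. -/

import Mathlib

open Filter Set Topology

/-- On a complete metric space, every `φ`-contraction for a comparison
function `φ` has a unique fixed point, and all orbits of iterates converge to it. -/
theorem phi_contraction_fixed_point {X : Type*} [MetricSpace X] [CompleteSpace X]
    [Nonempty X]
    (φ : ℝ → ℝ)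
    (hmap : ∀ t : ℝ, 0 ≤ t → 0 ≤ φ t)
    (hmono : ∀ s t : ℝ, 0 ≤ s → s ≤ t → φ s ≤ φ t)
    (hiter : ∀ t : ℝ, 0 ≤ t → Tendsto (fun p => φ^[p] t) atTop (nhds 0))
    (f : X → X)
    (hf : ∀ x₁ x₂ : X, dist (f x₁) (f x₂) ≤ φ (dist x₁ x₂)) :
    ∃ p : X, f p = p ∧ (∀ q : X, f q = q → q = p) ∧
      ∀ x₀ : X, Tendsto (fun n => f^[n] x₀) atTop (nhds p) := by
  -- iterates of φ stay nonnegative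
  have hiter_nonneg : ∀ t : ℝ, 0 ≤ t → ∀ n : ℕ, 0 ≤ φ^[n] t := by
    intro t ht n
    induction n with
    | zero => simpa using ht
    | succ n ih => rw [Function.iterate_succ_apply']; exact hmap _ ih
  -- φ t < t for t > 0
  have hlt : ∀ t : ℝ, 0 < t → φ t < t := by
    intro t ht
    by_contra h
    push_neg at h
    have hall : ∀ p : ℕ, t ≤ φ^[p] t := by
      intro p
      induction p with
      | zero => simp
      | succ p ih =>
        rw [Function.iterate_succ_apply']
        calc t ≤ φ t := h
        _ ≤ φ (φ^[p] t) := hmono _ _ ht.le ih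
    have := ge_of_tendsto (hiter t ht.le) (Eventually.of_forall hall)
    linarith
  -- φ t ≤ t for t ≥ 0
  have hle : ∀ t : ℝ, 0 ≤ t → φ t ≤ t := by
    intro t ht
    rcases ht.lt_or_eq with h | h
    · exact (hlt t h).le
    · subst h
      by_contra hc
      push_neg at hc
      have h1 : φ 0 ≤ φ (φ 0) := hmono _ _ le_rfl (hmap 0 le_rfl)
      have h2 : φ (φ 0) < φ 0 := hlt _ hc
      linarith
  -- key iterate bound
  have hkey : ∀ (a b : X) (n : ℕ), dist (f^[n] a) (f^[n] b) ≤ φ^[n] (dist a b) := by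
    intro a b n
    induction n with
    | zero => simp
    | succ n ih =>
      rw [Function.iterate_succ_apply', Function.iterate_succ_apply',
        Function.iterate_succ_apply']
      calc dist (f (f^[n] a)) (f (f^[n] b)) ≤ φ (dist (f^[n] a) (f^[n] b)) := hf _ _
      _ ≤ φ (φ^[n] (dist a b)) := hmono _ _ dist_nonneg ih
  -- f is nonexpansive, hence continuous
  have hcont : Continuous f := by
    apply LipschitzWith.continuous (K := 1)
    intro x y
    rw [edist_dist, edist_dist]
    simp only [ENNReal.coe_one, one_mul]
    exact ENNReal.ofReal_le_ofReal ((hf x y).trans (hle _ dist_nonneg))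
  -- convergence of iterates once we have a fixed point candidate... first build it
  obtain ⟨x₀⟩ := ‹Nonempty X›
  -- the orbit of x₀ is Cauchy
  have hd0 : Tendsto (fun n => dist (f^[n] x₀) (f^[n+1] x₀)) atTop (nhds 0) := by
    apply squeeze_zero (fun n => dist_nonneg) (g := fun n => φ^[n] (dist x₀ (f x₀)))
    · intro n
      rw [Function.iterate_succ_apply]
      exact hkey x₀ (f x₀) n
    · exact hiter _ dist_nonneg
  have hcauchy : CauchySeq (fun n => f^[n] x₀) := by
    rw [Metric.cauchySeq_iff']
    intro ε hε
    have hε2 : (0:ℝ) < ε / 2 := by linarith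
    have hδ : 0 < ε / 2 - φ (ε / 2) := by linarith [hlt (ε/2) hε2]
    obtain ⟨N, hN⟩ := (Metric.tendsto_atTop.mp hd0) (ε/2 - φ (ε/2)) hδ
    have hN' : dist (f^[N] x₀) (f^[N+1] x₀) ≤ ε/2 - φ (ε/2) := by
      have := hN N le_rfl
      rw [Real.dist_eq, sub_zero, abs_of_nonneg dist_nonneg] at this
      linarith
    -- claim: all later iterates stay within ε/2 of f^[N] x₀
    have claim : ∀ k : ℕ, dist (f^[N+k] x₀) (f^[N] x₀) ≤ ε/2 := by
      intro k
      induction k with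
      | zero => simp; linarith
      | succ k ih =>
        have : dist (f^[N+k+1] x₀) (f^[N+1] x₀) ≤ φ (ε/2) := by
          have h1 : dist (f^[N+k+1] x₀) (f^[N+1] x₀) ≤ φ (dist (f^[N+k] x₀) (f^[N] x₀)) := by
            rw [Function.iterate_succ_apply', Function.iterate_succ_apply']
            exact hf _ _
          exact h1.trans (hmono _ _ dist_nonneg ih)
        calc dist (f^[N+k+1] x₀) (f^[N] x₀)
            ≤ dist (f^[N+k+1] x₀) (f^[N+1] x₀) + dist (f^[N+1] x₀) (f^[N] x₀) :=
              dist_triangle _ _ _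
        _ ≤ φ (ε/2) + (ε/2 - φ (ε/2)) := by
              have := dist_comm (f^[N] x₀) (f^[N+1] x₀)
              linarith
        _ = ε/2 := by ring
    refine ⟨N, fun n hn => ?_⟩
    obtain ⟨k, rfl⟩ := Nat.exists_eq_add_of_le hn
    calc dist (f^[N+k] x₀) (f^[N] x₀) ≤ ε/2 := claim k
    _ < ε := by linarith
  obtain ⟨p, hp⟩ := cauchySeq_tendsto_of_complete hcauchy
  -- p is a fixed point
  have hfp : f p = p := by
    have h1 : Tendsto (fun n => f^[n+1] x₀) atTop (nhds (f p)) := by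
      have := (hcont.tendsto p).comp hp
      simpa [Function.comp_def, Function.iterate_succ_apply'] using this
    have h2 : Tendsto (fun n => f^[n+1] x₀) atTop (nhds p) :=
      hp.comp (tendsto_add_atTop_nat 1)
    exact tendsto_nhds_unique h1 h2
  refine ⟨p, hfp, ?_, ?_⟩
  · intro q hq
    by_contra hne
    have hd : 0 < dist q p := dist_pos.mpr hne
    have : dist q p ≤ φ (dist q p) := by
      conv_lhs => rw [← hq, ← hfp]
      exact hf q p
    linarith [hlt _ hd]
  · intro y
    rw [tendsto_iff_dist_tendsto_zero]
    apply squeeze_zero (fun n => dist_nonneg) (g := fun n => φ^[n] (dist y p))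
    · intro n
      have := hkey y p n
      have hpn : f^[n] p = p := Function.iterate_fixed hfp n
      rwa [hpn] at this
    · exact hiter _ dist_nonneg
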